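/- Let T > 0, α ∈ (−1,1) and h > 0. Then ∫₀^T ∫_ℝ ( e^{−(t+h)ξ²/2} − e^{−tξ²/2} )² · |ξ|^α dξ dt ≤ C_α · h^{(1−α)/2}, where C_α = ∫_ℝ (1 − e^{−η²/2})² · |η|^{α−2} dη < ∞. -/

import Mathlib

open MeasureTheory Real Set
open scoped ENNReal

private lemma lint_fin_aux {f : ℝ → ℝ} {s : Set ℝ} (hf : IntegrableOn f s) :
    (∫⁻ x in s, ENNReal.ofReal (f x)) < ⊤ :=
  lt_of_le_of_lt (lintegral_mono fun x => Real.ofReal_le_enorm (f x)) hf.2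

private lemma lint_neg_aux (f : ℝ → ℝ≥0∞) (hf : Measurable f) :
    (∫⁻ x in Iio (0:ℝ), f x) = ∫⁻ x in Ioi (0:ℝ), f (-x) := by
  have hneg : Measurable (fun x : ℝ => -x) := measurable_neg
  have hpre : (fun x : ℝ => -x) ⁻¹' (Iio 0) = Ioi 0 := by ext x; simp [neg_lt_zero]
  calc (∫⁻ x in Iio (0:ℝ), f x)
      = ∫⁻ x, f x ∂((Measure.map (fun x : ℝ => -x) volume).restrict (Iio 0)) := by
        rw [Measure.map_neg_eq_self (volume : Measure ℝ)]
    _ = ∫⁻ x, f x ∂(Measure.map (fun x : ℝ => -x) (volume.restrict (Ioi 0))) := by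
        rw [Measure.restrict_map hneg measurableSet_Iio, hpre]
    _ = ∫⁻ x in Ioi (0:ℝ), f (-x) := lintegral_map hf hneg

private lemma lint_mul_left_aux (g : ℝ → ℝ≥0∞) (hg : Measurable g) {a : ℝ} (ha : a ≠ 0) :
    (∫⁻ x : ℝ, g (a * x)) = ENNReal.ofReal |a⁻¹| * ∫⁻ x, g x := by
  rw [← lintegral_map hg (measurable_const_mul a), Real.map_volume_mul_left ha,
    lintegral_smul_measure, smul_eq_mul]

private lemma C_lt_top_aux {α : ℝ} (h1 : -1 < α) (h2 : α < 1) :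
    (∫⁻ η : ℝ, ENNReal.ofReal ((1 - Real.exp (-η ^ 2 / 2)) ^ 2 * |η| ^ (α - 2))) < ⊤ := by
  set f : ℝ → ℝ≥0∞ := fun η => ENNReal.ofReal ((1 - Real.exp (-η ^ 2 / 2)) ^ 2 * |η| ^ (α - 2))
    with hf
  have hfm : Measurable f := by fun_prop
  have hb : ∀ x : ℝ, 0 < x → (0 ≤ 1 - Real.exp (-x ^ 2 / 2) ∧ 1 - Real.exp (-x ^ 2 / 2) ≤ x ^ 2) := by
    intro x hx
    constructor
    · have : Real.exp (-x ^ 2 / 2) ≤ 1 := Real.exp_le_one_iff.2 (by nlinarith)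
      linarith
    · have := Real.add_one_le_exp (-(x ^ 2 / 2))
      have hx2 : (0:ℝ) ≤ x ^ 2 := sq_nonneg x
      have : 1 - Real.exp (-x ^ 2 / 2) ≤ x ^ 2 / 2 := by
        have he : Real.exp (-x^2/2) = Real.exp (-(x^2/2)) := by ring_nf
        rw [he]; linarith
      linarith
  have hIoc : (∫⁻ x in Ioc (0:ℝ) 1, f x) < ⊤ := by
    have hle : ∀ x ∈ Ioc (0:ℝ) 1, f x ≤ ENNReal.ofReal (x ^ (α + 2)) := by
      intro x hx
      obtain ⟨h0, hcap⟩ := hb x hx.1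
      apply ENNReal.ofReal_le_ofReal
      have hax : |x| = x := abs_of_pos hx.1
      rw [hax]
      calc (1 - Real.exp (-x ^ 2 / 2)) ^ 2 * x ^ (α - 2)
          ≤ (x ^ 2) ^ 2 * x ^ (α - 2) := by
            apply mul_le_mul_of_nonneg_right (pow_le_pow_left₀ h0 hcap 2)
              (Real.rpow_nonneg hx.1.le _)
        _ = x ^ ((4:ℕ):ℝ) * x ^ (α - 2) := by rw [Real.rpow_natCast]; ring
        _ = x ^ (((4:ℕ):ℝ) + (α - 2)) := (Real.rpow_add hx.1 _ _).symm
        _ = x ^ (α + 2) := by ring_nf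
    calc (∫⁻ x in Ioc (0:ℝ) 1, f x) ≤ ∫⁻ x in Ioc (0:ℝ) 1, ENNReal.ofReal (x ^ (α + 2)) :=
          setLIntegral_mono (by fun_prop) hle
      _ = ∫⁻ x in Ioo (0:ℝ) 1, ENNReal.ofReal (x ^ (α + 2)) := by
          rw [restrict_Ioo_eq_restrict_Ioc]
      _ < ⊤ := lint_fin_aux ((intervalIntegral.integrableOn_Ioo_rpow_iff one_pos).2 (by linarith))
  have hIoi1 : (∫⁻ x in Ioi (1:ℝ), f x) < ⊤ := by
    have hle : ∀ x ∈ Ioi (1:ℝ), f x ≤ ENNReal.ofReal (x ^ (α - 2)) := by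
      intro x hx
      have hx0 : (0:ℝ) < x := lt_trans one_pos hx
      obtain ⟨h0, _⟩ := hb x hx0
      apply ENNReal.ofReal_le_ofReal
      have hax : |x| = x := abs_of_pos hx0
      rw [hax]
      have he1 : 1 - Real.exp (-x ^ 2 / 2) ≤ 1 := by
        have := Real.exp_pos (-x ^ 2 / 2); linarith
      calc (1 - Real.exp (-x ^ 2 / 2)) ^ 2 * x ^ (α - 2)
          ≤ 1 ^ 2 * x ^ (α - 2) := mul_le_mul_of_nonneg_right
            (pow_le_pow_left₀ h0 he1 2) (Real.rpow_nonneg hx0.le _)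
        _ = x ^ (α - 2) := by ring
    calc (∫⁻ x in Ioi (1:ℝ), f x) ≤ ∫⁻ x in Ioi (1:ℝ), ENNReal.ofReal (x ^ (α - 2)) :=
          setLIntegral_mono (by fun_prop) hle
      _ < ⊤ := lint_fin_aux (integrableOn_Ioi_rpow_of_lt (by linarith) one_pos)
  have hIoi : (∫⁻ x in Ioi (0:ℝ), f x) < ⊤ := by
    have hu : Ioc (0:ℝ) 1 ∪ Ioi 1 = Ioi 0 := Ioc_union_Ioi_eq_Ioi zero_le_one
    rw [← hu, lintegral_union measurableSet_Ioi (Ioc_disjoint_Ioi le_rfl)]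
    exact ENNReal.add_lt_top.2 ⟨hIoc, hIoi1⟩
  have hIio : (∫⁻ x in Iio (0:ℝ), f x) < ⊤ := by
    rw [lint_neg_aux f hfm]
    have : ∀ x : ℝ, f (-x) = f x := by
      intro x; simp only [hf, abs_neg]
      rw [show (-x : ℝ) ^ 2 = x ^ 2 by ring]
    simpa only [this] using hIoi
  have : (∫⁻ η, f η) = (∫⁻ x in Iio (0:ℝ), f x) + ∫⁻ x in Ici (0:ℝ), f x := by
    rw [← lintegral_add_compl f measurableSet_Iio, compl_Iio]
  rw [this, ← restrict_Ioi_eq_restrict_Ici]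
  exact ENNReal.add_lt_top.2 ⟨hIio, hIoi⟩

/-- Lemma 3.5 of Balan–Jolis–Quer (heat case):
`∫₀^T ∫_ℝ (e^{-(t+h)ξ²/2} - e^{-tξ²/2})² |ξ|^α dξ dt ≤ C_α h^{(1-α)/2}` with
`C_α = ∫_ℝ (1 - e^{-η²/2})² |η|^{α-2} dη < ∞`. -/
theorem heat_spectral_time_increment (T : ℝ) (hT : 0 < T) (α : ℝ)
    (hα : α ∈ Set.Ioo (-1 : ℝ) 1) (h : ℝ) (hh : 0 < h) :
    (∫⁻ η : ℝ, ENNReal.ofReal ((1 - Real.exp (-η ^ 2 / 2)) ^ 2 * |η| ^ (α - 2))) < ⊤ ∧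
    (∫⁻ t in Set.Ioc (0 : ℝ) T, ∫⁻ ξ : ℝ,
        ENNReal.ofReal ((Real.exp (-(t + h) * ξ ^ 2 / 2) - Real.exp (-t * ξ ^ 2 / 2)) ^ 2
          * |ξ| ^ α))
      ≤ (∫⁻ η : ℝ, ENNReal.ofReal ((1 - Real.exp (-η ^ 2 / 2)) ^ 2 * |η| ^ (α - 2))) *
          ENNReal.ofReal (h ^ ((1 - α) / 2)) := by
  obtain ⟨hα1, hα2⟩ := hα
  refine ⟨C_lt_top_aux hα1 hα2, ?_⟩
  -- Step 1: pointwise factorization of the integrand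
  have key : ∀ t ξ : ℝ,
      ENNReal.ofReal ((Real.exp (-(t + h) * ξ ^ 2 / 2) - Real.exp (-t * ξ ^ 2 / 2)) ^ 2 * |ξ| ^ α)
      = ENNReal.ofReal (Real.exp (-t * ξ ^ 2)) *
        ENNReal.ofReal ((1 - Real.exp (-h * ξ ^ 2 / 2)) ^ 2 * |ξ| ^ α) := by
    intro t ξ
    rw [← ENNReal.ofReal_mul (Real.exp_nonneg _)]
    congr 1
    have e1 : Real.exp (-(t + h) * ξ ^ 2 / 2)
        = Real.exp (-t * ξ ^ 2 / 2) * Real.exp (-h * ξ ^ 2 / 2) := by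
      rw [← Real.exp_add]; congr 1; ring
    have e2 : Real.exp (-t * ξ ^ 2 / 2) * Real.exp (-t * ξ ^ 2 / 2)
        = Real.exp (-t * ξ ^ 2) := by
      rw [← Real.exp_add]; congr 1; ring
    rw [e1, ← e2]; ring
  have hae0 : ∀ᵐ ξ : ℝ, ξ ≠ (0:ℝ) := by
    rw [ae_iff]; simpa [not_not] using measure_singleton (0:ℝ)
  -- Step 2: for fixed ξ ≠ 0, bound the time integral
  have hdom : ∀ ξ : ℝ, ξ ≠ 0 →
      (∫⁻ t in Ioc (0:ℝ) T, ENNReal.ofReal (Real.exp (-t * ξ ^ 2)) *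
        ENNReal.ofReal ((1 - Real.exp (-h * ξ ^ 2 / 2)) ^ 2 * |ξ| ^ α))
      ≤ ENNReal.ofReal ((1 - Real.exp (-h * ξ ^ 2 / 2)) ^ 2 * |ξ| ^ (α - 2)) := by
    intro ξ hξ
    have hξ2 : (0:ℝ) < ξ ^ 2 := by positivity
    have habs : (0:ℝ) < |ξ| := abs_pos.2 hξ
    have hint : (∫⁻ t in Ioc (0:ℝ) T, ENNReal.ofReal (Real.exp (-t * ξ ^ 2)))
        ≤ ENNReal.ofReal ((ξ ^ 2)⁻¹) := by
      refine (lintegral_mono_set Ioc_subset_Ioi_self).trans (le_of_eq ?_)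
      have hrw : ∀ t : ℝ, -t * ξ ^ 2 = -ξ ^ 2 * t := fun t => by ring
      simp_rw [hrw]
      rw [← ofReal_integral_eq_lintegral_ofReal (exp_neg_integrableOn_Ioi 0 hξ2)
        (Filter.Eventually.of_forall fun t => Real.exp_nonneg _)]
      congr 1
      have hval := integral_comp_mul_left_Ioi (fun u => Real.exp (-u)) 0 hξ2
      simp only [mul_zero, integral_exp_neg_Ioi_zero, smul_eq_mul, mul_one] at hval
      rw [← hval]
      exact setIntegral_congr_fun measurableSet_Ioi fun x _ => by rw [neg_mul]
    have hc0 : (0:ℝ) ≤ (1 - Real.exp (-h * ξ ^ 2 / 2)) ^ 2 := sq_nonneg _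
    calc (∫⁻ t in Ioc (0:ℝ) T, ENNReal.ofReal (Real.exp (-t * ξ ^ 2)) *
            ENNReal.ofReal ((1 - Real.exp (-h * ξ ^ 2 / 2)) ^ 2 * |ξ| ^ α))
        = (∫⁻ t in Ioc (0:ℝ) T, ENNReal.ofReal (Real.exp (-t * ξ ^ 2))) *
            ENNReal.ofReal ((1 - Real.exp (-h * ξ ^ 2 / 2)) ^ 2 * |ξ| ^ α) :=
          lintegral_mul_const _ (by fun_prop)
      _ ≤ ENNReal.ofReal ((ξ ^ 2)⁻¹) *
            ENNReal.ofReal ((1 - Real.exp (-h * ξ ^ 2 / 2)) ^ 2 * |ξ| ^ α) :=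
          mul_le_mul_left hint _
      _ = ENNReal.ofReal ((ξ ^ 2)⁻¹ * ((1 - Real.exp (-h * ξ ^ 2 / 2)) ^ 2 * |ξ| ^ α)) :=
          (ENNReal.ofReal_mul (by positivity)).symm
      _ = ENNReal.ofReal ((1 - Real.exp (-h * ξ ^ 2 / 2)) ^ 2 * |ξ| ^ (α - 2)) := by
          congr 1
          have h2 : |ξ| ^ (α - 2) = |ξ| ^ α / ξ ^ 2 := by
            rw [Real.rpow_sub habs]
            congr 1
            rw [show (2:ℝ) = ((2:ℕ):ℝ) by norm_num, Real.rpow_natCast, sq_abs]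
          rw [h2]; ring
  -- Step 3: scaling identity
  have hscale : (∫⁻ ξ : ℝ, ENNReal.ofReal ((1 - Real.exp (-h * ξ ^ 2 / 2)) ^ 2 * |ξ| ^ (α - 2)))
      = (∫⁻ η : ℝ, ENNReal.ofReal ((1 - Real.exp (-η ^ 2 / 2)) ^ 2 * |η| ^ (α - 2))) *
        ENNReal.ofReal (h ^ ((1 - α) / 2)) := by
    set s : ℝ := h ^ ((1:ℝ)/2) with hs
    have hs0 : 0 < s := Real.rpow_pos_of_pos hh _
    have hs2 : s ^ 2 = h := by
      rw [hs, ← Real.rpow_natCast (h ^ ((1:ℝ)/2)) 2, ← Real.rpow_mul hh.le]; norm_num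
    have hptw : ∀ ξ : ℝ,
        ENNReal.ofReal ((1 - Real.exp (-h * ξ ^ 2 / 2)) ^ 2 * |ξ| ^ (α - 2))
        = ENNReal.ofReal ((1 - Real.exp (-(s * ξ) ^ 2 / 2)) ^ 2 * |s * ξ| ^ (α - 2))
            * ENNReal.ofReal (s ^ (2 - α)) := by
      intro ξ
      rw [← ENNReal.ofReal_mul (by positivity)]
      congr 1
      have habs : |s * ξ| ^ (α - 2) = s ^ (α - 2) * |ξ| ^ (α - 2) := by
        rw [abs_mul, abs_of_pos hs0, Real.mul_rpow hs0.le (abs_nonneg _)]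
      have hexp : -(s * ξ) ^ 2 / 2 = -h * ξ ^ 2 / 2 := by rw [mul_pow, hs2]; ring
      rw [hexp, habs]
      have hss : s ^ (α - 2) * s ^ (2 - α) = 1 := by
        rw [← Real.rpow_add hs0]; norm_num
      linear_combination (-((1 - Real.exp (-h * ξ ^ 2 / 2)) ^ 2 * |ξ| ^ (α - 2))) * hss
    calc (∫⁻ ξ : ℝ, ENNReal.ofReal ((1 - Real.exp (-h * ξ ^ 2 / 2)) ^ 2 * |ξ| ^ (α - 2)))
        = ∫⁻ ξ : ℝ, ENNReal.ofReal ((1 - Real.exp (-(s * ξ) ^ 2 / 2)) ^ 2 * |s * ξ| ^ (α - 2))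
            * ENNReal.ofReal (s ^ (2 - α)) := lintegral_congr hptw
      _ = (∫⁻ ξ : ℝ, ENNReal.ofReal ((1 - Real.exp (-(s * ξ) ^ 2 / 2)) ^ 2
            * |s * ξ| ^ (α - 2))) * ENNReal.ofReal (s ^ (2 - α)) :=
          lintegral_mul_const _ (by fun_prop)
      _ = (ENNReal.ofReal |s⁻¹| *
            ∫⁻ η : ℝ, ENNReal.ofReal ((1 - Real.exp (-η ^ 2 / 2)) ^ 2 * |η| ^ (α - 2))) *
            ENNReal.ofReal (s ^ (2 - α)) := by
          rw [lint_mul_left_aux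
            (fun η => ENNReal.ofReal ((1 - Real.exp (-η ^ 2 / 2)) ^ 2 * |η| ^ (α - 2)))
            (by fun_prop) (ne_of_gt hs0)]
      _ = (∫⁻ η : ℝ, ENNReal.ofReal ((1 - Real.exp (-η ^ 2 / 2)) ^ 2 * |η| ^ (α - 2))) *
            ENNReal.ofReal (h ^ ((1 - α) / 2)) := by
          rw [abs_of_pos (inv_pos.2 hs0), mul_comm (ENNReal.ofReal s⁻¹), mul_assoc,
            ← ENNReal.ofReal_mul (inv_nonneg.2 hs0.le)]
          congr 2
          rw [← Real.rpow_neg_one s, ← Real.rpow_add hs0, hs, ← Real.rpow_mul hh.le]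
          congr 1; ring
  -- Step 4: assemble
  simp_rw [key]
  calc (∫⁻ t in Ioc (0:ℝ) T, ∫⁻ ξ : ℝ, ENNReal.ofReal (Real.exp (-t * ξ ^ 2)) *
          ENNReal.ofReal ((1 - Real.exp (-h * ξ ^ 2 / 2)) ^ 2 * |ξ| ^ α))
      = ∫⁻ ξ : ℝ, ∫⁻ t in Ioc (0:ℝ) T, ENNReal.ofReal (Real.exp (-t * ξ ^ 2)) *
          ENNReal.ofReal ((1 - Real.exp (-h * ξ ^ 2 / 2)) ^ 2 * |ξ| ^ α) :=
        lintegral_lintegral_swap (by fun_prop)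
    _ ≤ ∫⁻ ξ : ℝ, ENNReal.ofReal ((1 - Real.exp (-h * ξ ^ 2 / 2)) ^ 2 * |ξ| ^ (α - 2)) :=
        lintegral_mono_ae (hae0.mono fun ξ hξ => hdom ξ hξ)
    _ = (∫⁻ η : ℝ, ENNReal.ofReal ((1 - Real.exp (-η ^ 2 / 2)) ^ 2 * |η| ^ (α - 2))) *
          ENNReal.ofReal (h ^ ((1 - α) / 2)) := hscale
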